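/- Let x ∈ ℂ^N, A ∈ ℂ^{N×M}, and define G_c ∈ ℝ^{2N×M} with top block Re(A diag(A^H x)) and bottom block Im(A diag(A^H x)). Then the vector v = [−Im(x); Re(x)] ∈ ℝ^{2N} satisfies G_c^T v = 0, hence v lies in the null space of F_c = (4/σ²) G_c G_c^T. -/
import Mathlib


open Matrix

/-- The 2N×M matrix G_c with top block Re(A diag(Aᴴx)) and bottom block Im(A diag(Aᴴx)). -/
noncomputable def Gc {N M : ℕ} (x : Fin N → ℂ)
    (A : Matrix (Fin N) (Fin M) ℂ) : Matrix (Fin N ⊕ Fin N) (Fin M) ℝ :=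
  Matrix.of fun p i =>
    Sum.elim
      (fun n => (A n i * (∑ k, star (A k i) * x k)).re)
      (fun n => (A n i * (∑ k, star (A k i) * x k)).im) p

/-- v = [−Im(x); Re(x)] satisfies G_cᵀ v = 0, hence v lies in the null space of
F_c = (4/σ²) G_c G_cᵀ. -/
theorem stmt_5 (N M : ℕ) (x : Fin N → ℂ) (A : Matrix (Fin N) (Fin M) ℂ)
    (σ : ℝ) (hσ : 0 < σ) :
    (Gc x A)ᵀ.mulVec (Sum.elim (fun n => -(x n).im) (fun n => (x n).re)) = 0 ∧
    ((4/σ^2) • (Gc x A * (Gc x A)ᵀ)).mulVec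
      (Sum.elim (fun n => -(x n).im) (fun n => (x n).re)) = 0 := by
  have key : (Gc x A)ᵀ.mulVec (Sum.elim (fun n => -(x n).im) (fun n => (x n).re)) = 0 := by
    funext i
    simp only [mulVec, dotProduct, transpose_apply, Gc, Matrix.of_apply, Pi.zero_apply,
      Fintype.sum_sum_type, Sum.elim_inl, Sum.elim_inr]
    set s : ℂ := ∑ k, star (A k i) * x k with hs
    have h1 : ∀ n, (A n i * s).re * -(x n).im + ((A n i * s).im * (x n).re) =
        ((starRingEnd ℂ) (x n) * (A n i * s)).im := by
      intro n
      simp [Complex.mul_im, Complex.mul_re]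
      ring
    have hsplit : (∑ n, (A n i * s).re * -(x n).im) + ∑ n, (A n i * s).im * (x n).re =
        ∑ n, ((A n i * s).re * -(x n).im + (A n i * s).im * (x n).re) :=
      (Finset.sum_add_distrib).symm
    rw [hsplit]
    have : ∑ n, ((A n i * s).re * -(x n).im + (A n i * s).im * (x n).re) =
        ((starRingEnd ℂ) s * s).im := by
      rw [show ((starRingEnd ℂ) s * s) = ∑ n, (starRingEnd ℂ) (x n) * (A n i * s) by
        rw [hs, map_sum, Finset.sum_mul]
        congr 1; funext n; ring_nf
        simp only [_root_.map_mul, starRingEnd_apply, star_star]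
        ring]
      rw [Complex.im_sum]
      exact Finset.sum_congr rfl fun n _ => h1 n
    rw [this]
    simp [Complex.mul_im]
    ring
  refine ⟨key, ?_⟩
  rw [smul_mulVec, ← mulVec_mulVec, key]
  simp
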